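/- For every real d ≥ 2, ∫_0^1 min( 2^β, (1 − (1/2)(1 − 1/d)) / (1 − 2^{−β}(1 − 1/d)) ) dβ = (1 − 1/d)/(2 ln 2) + (d + 1)/(2d). -/

import Mathlib

/-- the key integral identity for the random-shift analysis. -/
theorem integral_min_identity (d : ℝ) (hd : 2 ≤ d) :
    ∫ β in (0:ℝ)..1,
        min ((2 : ℝ) ^ β)
          ((1 - (1/2) * (1 - 1/d)) / (1 - (2 : ℝ) ^ (-β) * (1 - 1/d)))
      = (1 - 1/d) / (2 * Real.log 2) + (d + 1) / (2 * d) := by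
  have hd0 : (0:ℝ) < d := by linarith
  have hinv : 1/d ≤ 1/2 := by
    rw [div_le_div_iff₀ hd0 (by norm_num)]; linarith
  have hinv0 : 0 < 1/d := by positivity
  set a : ℝ := 1 - 1/d with ha
  have ha05 : (1:ℝ)/2 ≤ a := by rw [ha]; linarith
  have ha1 : a < 1 := by rw [ha]; linarith
  have hapos : 0 < a := lt_of_lt_of_le (by norm_num) ha05
  have hlog2 : 0 < Real.log 2 := Real.log_pos one_lt_two
  set c : ℝ := Real.logb 2 (1 + a/2) with hcdef
  have h2c : (2:ℝ) ^ c = 1 + a/2 :=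
    Real.rpow_logb (by norm_num) (by norm_num) (by linarith)
  have hc0 : 0 < c := Real.logb_pos (by norm_num) (by linarith)
  have hc1 : c < 1 := by
    rw [hcdef, Real.logb_lt_iff_lt_rpow (by norm_num) (by linarith), Real.rpow_one]
    linarith
  have h2pos : ∀ β : ℝ, (0:ℝ) < (2:ℝ)^β := fun β => Real.rpow_pos_of_pos two_pos β
  have hone : ∀ β : ℝ, 0 ≤ β → 1 ≤ (2:ℝ)^β := by
    intro β hβ
    calc (1:ℝ) = 2^(0:ℝ) := by simp
    _ ≤ 2^β := by
        rw [Real.rpow_le_rpow_left_iff (by norm_num : (1:ℝ) < 2)]; exact hβ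
  have hkey : ∀ β : ℝ, 1 - (2:ℝ)^(-β) * a = ((2:ℝ)^β - a)/(2:ℝ)^β := by
    intro β
    have h2b := h2pos β
    rw [Real.rpow_neg (by norm_num)]
    field_simp
  have hsub : ∀ β : ℝ, 0 ≤ β → 0 < (2:ℝ)^β - a := by
    intro β hβ; have := hone β hβ; linarith
  have hden : ∀ β : ℝ, 0 ≤ β → 0 < 1 - (2:ℝ)^(-β) * a := by
    intro β hβ
    rw [hkey β]
    exact div_pos (hsub β hβ) (h2pos β)
  -- rewrite the second branch
  have hgeq : ∀ β : ℝ, 0 ≤ β →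
      (1 - (1/2) * a) / (1 - (2:ℝ)^(-β) * a) = (1 - a/2) * (2:ℝ)^β / ((2:ℝ)^β - a) := by
    intro β hβ
    rw [hkey β]
    rw [div_div_eq_mul_div]
    ring_nf
  -- min characterization on [0,c]
  have hmin1 : ∀ β ∈ Set.uIcc (0:ℝ) c,
      min ((2:ℝ)^β) ((1 - (1/2) * a) / (1 - (2:ℝ)^(-β) * a)) = (2:ℝ)^β := by
    intro β hβ
    rw [Set.uIcc_of_le hc0.le] at hβ
    obtain ⟨hβ0, hβc⟩ := hβ
    apply min_eq_left
    rw [le_div_iff₀ (hden β hβ0)]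
    have hmul : (2:ℝ)^β * (2:ℝ)^(-β) = 1 := by
      rw [← Real.rpow_add two_pos]; simp
    have h2βc : (2:ℝ)^β ≤ (2:ℝ)^c := by
      rw [Real.rpow_le_rpow_left_iff (by norm_num : (1:ℝ) < 2)]; exact hβc
    rw [h2c] at h2βc
    have : (2:ℝ)^β * (1 - (2:ℝ)^(-β) * a) = (2:ℝ)^β - a := by
      have := hmul; nlinarith [hmul]
    rw [this]; linarith
  -- min characterization on [c,1]
  have hmin2 : ∀ β ∈ Set.uIcc c (1:ℝ),
      min ((2:ℝ)^β) ((1 - (1/2) * a) / (1 - (2:ℝ)^(-β) * a))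
        = (1 - a/2) * (2:ℝ)^β / ((2:ℝ)^β - a) := by
    intro β hβ
    rw [Set.uIcc_of_le hc1.le] at hβ
    obtain ⟨hβc, hβ1⟩ := hβ
    have hβ0 : (0:ℝ) ≤ β := le_trans hc0.le hβc
    rw [← hgeq β hβ0]
    apply min_eq_right
    rw [div_le_iff₀ (hden β hβ0)]
    have hmul : (2:ℝ)^β * (2:ℝ)^(-β) = 1 := by
      rw [← Real.rpow_add two_pos]; simp
    have h2βc : (2:ℝ)^c ≤ (2:ℝ)^β := by
      rw [Real.rpow_le_rpow_left_iff (by norm_num : (1:ℝ) < 2)]; exact hβc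
    rw [h2c] at h2βc
    have : (2:ℝ)^β * (1 - (2:ℝ)^(-β) * a) = (2:ℝ)^β - a := by nlinarith [hmul]
    rw [this]; linarith
  -- continuity / integrability
  have hcont2 : Continuous fun β : ℝ => (2:ℝ)^β := by
    have : (fun β : ℝ => (2:ℝ)^β) = fun β : ℝ => Real.exp (Real.log 2 * β) := by
      funext β; rw [Real.rpow_def_of_pos two_pos]
    rw [this]; exact Real.continuous_exp.comp (continuous_const.mul continuous_id)
  have hcontm : Continuous fun β : ℝ => (2:ℝ)^(-β) := by
    have : (fun β : ℝ => (2:ℝ)^(-β)) = fun β : ℝ => Real.exp (Real.log 2 * (-β)) := by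
      funext β; rw [Real.rpow_def_of_pos two_pos]
    rw [this]; exact Real.continuous_exp.comp (continuous_const.mul continuous_neg)
  have hcontF : ContinuousOn
      (fun β => min ((2:ℝ)^β) ((1 - (1/2) * a) / (1 - (2:ℝ)^(-β) * a)))
      (Set.Icc (0:ℝ) 1) := by
    have hdiv : ContinuousOn
        (fun β => (1 - (1/2) * a) / (1 - (2:ℝ)^(-β) * a)) (Set.Icc (0:ℝ) 1) := by
      apply ContinuousOn.div continuousOn_const
      · exact (continuous_const.sub (hcontm.mul continuous_const)).continuousOn
      · intro β hβ
        exact (hden β hβ.1).ne'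
    exact continuous_min.comp_continuousOn (hcont2.continuousOn.prodMk hdiv)
  have hint1 : IntervalIntegrable
      (fun β => min ((2:ℝ)^β) ((1 - (1/2) * a) / (1 - (2:ℝ)^(-β) * a)))
      MeasureTheory.volume 0 c := by
    apply ContinuousOn.intervalIntegrable
    apply hcontF.mono
    rw [Set.uIcc_of_le hc0.le]
    exact Set.Icc_subset_Icc le_rfl hc1.le
  have hint2 : IntervalIntegrable
      (fun β => min ((2:ℝ)^β) ((1 - (1/2) * a) / (1 - (2:ℝ)^(-β) * a)))
      MeasureTheory.volume c 1 := by
    apply ContinuousOn.intervalIntegrable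
    apply hcontF.mono
    rw [Set.uIcc_of_le hc1.le]
    exact Set.Icc_subset_Icc hc0.le le_rfl
  rw [← intervalIntegral.integral_add_adjacent_intervals hint1 hint2]
  -- first piece
  have hI1 : (∫ β in (0:ℝ)..c,
      min ((2:ℝ)^β) ((1 - (1/2) * a) / (1 - (2:ℝ)^(-β) * a)))
      = (2:ℝ)^c / Real.log 2 - 1 / Real.log 2 := by
    rw [intervalIntegral.integral_congr hmin1]
    have := intervalIntegral.integral_eq_sub_of_hasDerivAt
      (f := fun β => (2:ℝ)^β / Real.log 2) (f' := fun β => (2:ℝ)^β)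
      (a := (0:ℝ)) (b := c)
      (fun β _ => by
        have h := ((Real.hasStrictDerivAt_const_rpow
          (by norm_num : (0:ℝ) < 2) β).hasDerivAt).div_const (Real.log 2)
        have heq : (2:ℝ)^β * Real.log 2 / Real.log 2 = (2:ℝ)^β := by
          field_simp
        rwa [heq] at h)
      (hcont2.intervalIntegrable 0 c)
    rw [this]
    norm_num
  -- second piece
  have hI2 : (∫ β in c..(1:ℝ),
      min ((2:ℝ)^β) ((1 - (1/2) * a) / (1 - (2:ℝ)^(-β) * a)))
      = (1 - a/2)/Real.log 2 * Real.log ((2:ℝ)^(1:ℝ) - a)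
        - (1 - a/2)/Real.log 2 * Real.log ((2:ℝ)^c - a) := by
    rw [intervalIntegral.integral_congr hmin2]
    have hcontg : ContinuousOn (fun β => (1 - a/2) * (2:ℝ)^β / ((2:ℝ)^β - a))
        (Set.uIcc c 1) := by
      apply ContinuousOn.div ((continuous_const.mul hcont2).continuousOn)
        ((hcont2.sub continuous_const).continuousOn)
      intro β hβ
      rw [Set.uIcc_of_le hc1.le] at hβ
      exact (hsub β (le_trans hc0.le hβ.1)).ne'
    have := intervalIntegral.integral_eq_sub_of_hasDerivAt
      (f := fun β => (1 - a/2)/Real.log 2 * Real.log ((2:ℝ)^β - a))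
      (f' := fun β => (1 - a/2) * (2:ℝ)^β / ((2:ℝ)^β - a))
      (a := c) (b := (1:ℝ))
      (fun β hβ => by
        rw [Set.uIcc_of_le hc1.le] at hβ
        have hβ0 : (0:ℝ) ≤ β := le_trans hc0.le hβ.1
        have hne : (2:ℝ)^β - a ≠ 0 := (hsub β hβ0).ne'
        have hu : HasDerivAt (fun β => (2:ℝ)^β - a) ((2:ℝ)^β * Real.log 2) β :=
          ((Real.hasStrictDerivAt_const_rpow (by norm_num : (0:ℝ) < 2) β).hasDerivAt).sub_const a
        have hl := (Real.hasDerivAt_log hne).comp β hu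
        have h := hl.const_mul ((1 - a/2)/Real.log 2)
        have heq : (1 - a/2)/Real.log 2 * (((2:ℝ)^β - a)⁻¹ * ((2:ℝ)^β * Real.log 2))
            = (1 - a/2) * (2:ℝ)^β / ((2:ℝ)^β - a) := by
          field_simp
        rwa [heq] at h)
      (hcontg.intervalIntegrable)
    rw [this]
  rw [hI1, hI2]
  -- final arithmetic
  rw [h2c, Real.rpow_one]
  have h1a2 : (0:ℝ) < 1 - a/2 := by linarith
  have hlogeq : Real.log (2 - a) = Real.log 2 + Real.log (1 - a/2) := by
    have : (2:ℝ) - a = 2 * (1 - a/2) := by ring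
    rw [this, Real.log_mul (by norm_num) h1a2.ne']
  have hca : (1:ℝ) + a/2 - a = 1 - a/2 := by ring
  rw [hca, hlogeq]
  have hd' : d ≠ 0 := hd0.ne'
  have hln : Real.log 2 ≠ 0 := hlog2.ne'
  rw [ha]
  field_simp
  ring
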